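/- Local Lipschitz estimate with singular weight for the regularized Newtonian force: there is a constant C depending only on d such that for all x, y in R^d with |y − x| < 2ε, one has |∇W^ε(x) − ∇W^ε(y)| ≤ q^ε(x)|x − y|, where q^ε(x) = C/|x|^d if |x| ≥ 3ε and q^ε(x) = C ε^{-d} if |x| < 3ε. -/

import Mathlib

open Real Topology Filter

/-- MVT-type estimate where the derivative is only assumed on the open interval. -/
lemma mvt_Ioo {E : Type*} [NormedAddCommGroup E] [NormedSpace ℝ E] {f : ℝ → E} {f' : ℝ → E}
    {C a b : ℝ} (hab : a ≤ b) (hC : 0 ≤ C) (hcont : ContinuousOn f (Set.Icc a b))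
    (hder : ∀ t ∈ Set.Ioo a b, HasDerivAt f (f' t) t)
    (hbd : ∀ t ∈ Set.Ioo a b, ‖f' t‖ ≤ C) : ‖f b - f a‖ ≤ C * (b - a) := by
  rcases eq_or_lt_of_le hab with rfl | hlt
  · simp
  have key : ∀ a' ∈ Set.Ioc a b, ‖f b - f a'‖ ≤ C * (b - a) := by
    intro a' ha'
    rcases eq_or_lt_of_le ha'.2 with rfl | ha'b
    · simp only [sub_self, norm_zero]
      exact mul_nonneg hC (by linarith [ha'.1])
    · have h1 := norm_image_sub_le_of_norm_deriv_right_le_segment (a := a') (b := b)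
        (f := f) (f' := f')
        (hcont.mono (Set.Icc_subset_Icc ha'.1.le le_rfl))
        (fun t ht => (hder t ⟨lt_of_lt_of_le ha'.1 ht.1, ht.2⟩).hasDerivWithinAt)
        (fun t ht => hbd t ⟨lt_of_lt_of_le ha'.1 ht.1, ht.2⟩) b (Set.right_mem_Icc.2 ha'b.le)
      calc ‖f b - f a'‖ ≤ C * (b - a') := h1
        _ ≤ C * (b - a) := mul_le_mul_of_nonneg_left (by linarith [ha'.1]) hC
  haveI : (𝓝[Set.Ioc a b] a).NeBot := by
    rw [← mem_closure_iff_nhdsWithin_neBot, closure_Ioc hlt.ne]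
    exact ⟨le_rfl, hab⟩
  have h3 : Filter.Tendsto f (𝓝[Set.Ioc a b] a) (𝓝 (f a)) :=
    (hcont a ⟨le_rfl, hab⟩).mono_left (nhdsWithin_mono a Set.Ioc_subset_Icc_self)
  have htend : Filter.Tendsto (fun t => ‖f b - f t‖) (𝓝[Set.Ioc a b] a) (𝓝 ‖f b - f a‖) :=
    (tendsto_const_nhds.sub h3).norm
  exact le_of_tendsto htend (eventually_mem_nhdsWithin.mono key)

/-- Lipschitz estimate on the closed ball from a derivative bound on the open ball. -/
lemma lip_closedBall {E F : Type*} [NormedAddCommGroup E] [NormedSpace ℝ E]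
    [NormedAddCommGroup F] [NormedSpace ℝ F] {f : E → F} {f' : E → E →L[ℝ] F} {ε K : ℝ}
    (hε : 0 < ε) (hK : 0 ≤ K) (hfc : Continuous f)
    (hder : ∀ z, ‖z‖ < ε → HasFDerivAt f (f' z) z)
    (hbd : ∀ z, ‖z‖ < ε → ‖f' z‖ ≤ K) :
    ∀ u v : E, ‖u‖ ≤ ε → ‖v‖ ≤ ε → ‖f u - f v‖ ≤ K * ‖u - v‖ := by
  have hball : ∀ u v : E, ‖u‖ < ε → ‖v‖ < ε → ‖f u - f v‖ ≤ K * ‖u - v‖ := by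
    intro u v hu hv
    exact Convex.norm_image_sub_le_of_norm_hasFDerivWithin_le (𝕜 := ℝ)
      (fun z hz => (hder z (mem_ball_zero_iff.1 hz)).hasFDerivWithinAt)
      (fun z hz => hbd z (mem_ball_zero_iff.1 hz)) (convex_ball 0 ε)
      (mem_ball_zero_iff.2 hv) (mem_ball_zero_iff.2 hu)
  intro u v hu hv
  have htend : Filter.Tendsto (fun t : ℝ => ‖f (t • u) - f (t • v)‖) (𝓝[<] (1 : ℝ))
      (𝓝 ‖f u - f v‖) := by
    have hc : Continuous fun t : ℝ => ‖f (t • u) - f (t • v)‖ := by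
      exact ((hfc.comp (continuous_id.smul continuous_const)).sub
        (hfc.comp (continuous_id.smul continuous_const))).norm
    have h1 : Filter.Tendsto (fun t : ℝ => ‖f (t • u) - f (t • v)‖) (𝓝 1)
        (𝓝 ‖f u - f v‖) := by simpa using hc.tendsto 1
    exact h1.mono_left nhdsWithin_le_nhds
  refine le_of_tendsto htend ?_
  have hmem : Set.Ioo (0 : ℝ) 1 ∈ 𝓝[<] (1 : ℝ) :=
    Ioo_mem_nhdsLT_of_mem ⟨zero_lt_one, le_rfl⟩
  refine Filter.eventually_of_mem hmem fun t ht => ?_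
  have h1 : ‖t • u‖ < ε := by
    rw [norm_smul, Real.norm_eq_abs, abs_of_pos ht.1]
    calc t * ‖u‖ ≤ t * ε := mul_le_mul_of_nonneg_left hu ht.1.le
      _ < 1 * ε := by nlinarith [ht.2]
      _ = ε := one_mul ε
  have h2 : ‖t • v‖ < ε := by
    rw [norm_smul, Real.norm_eq_abs, abs_of_pos ht.1]
    calc t * ‖v‖ ≤ t * ε := mul_le_mul_of_nonneg_left hv ht.1.le
      _ < 1 * ε := by nlinarith [ht.2]
      _ = ε := one_mul ε
  calc ‖f (t • u) - f (t • v)‖ ≤ K * ‖t • u - t • v‖ := hball _ _ h1 h2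
    _ = K * (|t| * ‖u - v‖) := by rw [← smul_sub, norm_smul, Real.norm_eq_abs]
    _ ≤ K * (1 * ‖u - v‖) := by
        refine mul_le_mul_of_nonneg_left (mul_le_mul_of_nonneg_right ?_ (norm_nonneg _)) hK
        rw [abs_of_pos ht.1]; exact ht.2.le
    _ = K * ‖u - v‖ := by rw [one_mul]

/-- Global Lipschitz estimate for a function differentiable off a sphere. -/
lemma lip_global {E F : Type*} [NormedAddCommGroup E] [NormedSpace ℝ E]
    [NormedAddCommGroup F] [NormedSpace ℝ F] {f : E → F} {f' : E → E →L[ℝ] F} {ε K : ℝ}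
    (hε : 0 < ε) (hK : 0 ≤ K) (hfc : Continuous f)
    (hder : ∀ z, ‖z‖ ≠ ε → HasFDerivAt f (f' z) z)
    (hbd : ∀ z, ‖z‖ ≠ ε → ‖f' z‖ ≤ K) :
    ∀ x y : E, ‖f x - f y‖ ≤ K * ‖x - y‖ := by
  intro x y
  set φ : ℝ → E := fun t => x + t • (y - x) with hφ
  have hφ0 : φ 0 = x := by simp [hφ]
  have hφ1 : φ 1 = y := by simp [hφ]
  have hφd : ∀ t : ℝ, HasDerivAt φ (y - x) t := by
    intro t
    have := ((hasDerivAt_id t).smul_const (y - x)).const_add x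
    simpa only [id_eq, one_smul] using this
  have hφc : Continuous φ := continuous_const.add (continuous_id.smul continuous_const)
  have hgc : Continuous (f ∘ φ) := hfc.comp hφc
  have hgder : ∀ t : ℝ, ‖φ t‖ ≠ ε → HasDerivAt (f ∘ φ) (f' (φ t) (y - x)) t := fun t ht =>
    (hder _ ht).comp_hasDerivAt t (hφd t)
  have hgbd : ∀ t : ℝ, ‖φ t‖ ≠ ε → ‖f' (φ t) (y - x)‖ ≤ K * ‖y - x‖ := by
    intro t ht
    calc ‖f' (φ t) (y - x)‖ ≤ ‖f' (φ t)‖ * ‖y - x‖ := (f' (φ t)).le_opNorm _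
      _ ≤ K * ‖y - x‖ := mul_le_mul_of_nonneg_right (hbd _ ht) (norm_nonneg _)
  have hKn : 0 ≤ K * ‖y - x‖ := mul_nonneg hK (norm_nonneg _)
  set S : Set ℝ := Set.Icc 0 1 ∩ {t | ‖φ t‖ ≤ ε} with hS
  have hSclosed : IsClosed S :=
    isClosed_Icc.inter (isClosed_le (by continuity) continuous_const)
  have hScompact : IsCompact S :=
    isCompact_Icc.of_isClosed_subset hSclosed Set.inter_subset_left
  -- helper: MVT on any subinterval [c, e] of [0,1] avoiding S on its interior
  have piece : ∀ c e : ℝ, c ≤ e → 0 ≤ c → e ≤ 1 → (∀ t ∈ Set.Ioo c e, t ∉ S) →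
      ‖(f ∘ φ) e - (f ∘ φ) c‖ ≤ K * ‖y - x‖ * (e - c) := by
    intro c e hce hc he hav
    refine mvt_Ioo (f' := fun t => f' (φ t) (y - x)) hce hKn hgc.continuousOn (fun t ht => ?_) (fun t ht => ?_)
    · refine hgder t ?_
      have : ¬ ‖φ t‖ ≤ ε := fun h =>
        hav t ht ⟨⟨hc.trans ht.1.le, ht.2.le.trans he⟩, h⟩
      exact ne_of_gt (lt_of_not_ge this)
    · refine hgbd t ?_
      have : ¬ ‖φ t‖ ≤ ε := fun h =>
        hav t ht ⟨⟨hc.trans ht.1.le, ht.2.le.trans he⟩, h⟩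
      exact ne_of_gt (lt_of_not_ge this)
  by_cases hSne : S.Nonempty
  · set a := sInf S with ha
    set b := sSup S with hb
    have haS : a ∈ S := hScompact.sInf_mem hSne
    have hbS : b ∈ S := hScompact.sSup_mem hSne
    have hab : a ≤ b := le_csSup hScompact.bddAbove haS
    have h01a : a ∈ Set.Icc (0:ℝ) 1 := haS.1
    have h01b : b ∈ Set.Icc (0:ℝ) 1 := hbS.1
    have p1 : ‖(f ∘ φ) a - (f ∘ φ) 0‖ ≤ K * ‖y - x‖ * (a - 0) := by
      refine piece 0 a h01a.1 le_rfl h01a.2 ?_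
      intro t ht hmem
      exact absurd (csInf_le hScompact.bddBelow hmem) (not_le.2 ht.2)
    have p3 : ‖(f ∘ φ) 1 - (f ∘ φ) b‖ ≤ K * ‖y - x‖ * (1 - b) := by
      refine piece b 1 h01b.2 h01b.1 le_rfl ?_
      intro t ht hmem
      exact absurd (le_csSup hScompact.bddAbove hmem) (not_le.2 ht.1)
    have p2 : ‖(f ∘ φ) b - (f ∘ φ) a‖ ≤ K * ‖y - x‖ * (b - a) := by
      have hlip := lip_closedBall hε hK hfc
        (fun z hz => hder z (ne_of_lt hz)) (fun z hz => hbd z (ne_of_lt hz))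
        (φ b) (φ a) hbS.2 haS.2
      have hdiff : φ b - φ a = (b - a) • (y - x) := by
        simp only [hφ]
        rw [sub_smul]
        abel
      have hnorm : ‖φ b - φ a‖ = (b - a) * ‖y - x‖ := by
        rw [hdiff, norm_smul, Real.norm_eq_abs, abs_of_nonneg (by linarith)]
      calc ‖(f ∘ φ) b - (f ∘ φ) a‖ ≤ K * ‖φ b - φ a‖ := hlip
        _ = K * ‖y - x‖ * (b - a) := by rw [hnorm]; ring
    have : ‖f x - f y‖ ≤ ‖(f ∘ φ) 1 - (f ∘ φ) b‖ + ‖(f ∘ φ) b - (f ∘ φ) a‖ +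
        ‖(f ∘ φ) a - (f ∘ φ) 0‖ := by
      have h0 : (f ∘ φ) 0 = f x := by rw [Function.comp_apply, hφ0]
      have h1 : (f ∘ φ) 1 = f y := by rw [Function.comp_apply, hφ1]
      rw [norm_sub_rev]
      calc ‖f y - f x‖ = ‖((f ∘ φ) 1 - (f ∘ φ) b) + ((f ∘ φ) b - (f ∘ φ) a) +
          ((f ∘ φ) a - (f ∘ φ) 0)‖ := by rw [h0, h1]; congr 1; abel
        _ ≤ _ := norm_add₃_le
    calc ‖f x - f y‖ ≤ ‖(f ∘ φ) 1 - (f ∘ φ) b‖ + ‖(f ∘ φ) b - (f ∘ φ) a‖ +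
        ‖(f ∘ φ) a - (f ∘ φ) 0‖ := this
      _ ≤ K * ‖y - x‖ * (1 - b) + K * ‖y - x‖ * (b - a) + K * ‖y - x‖ * (a - 0) := by
          exact add_le_add (add_le_add p3 p2) p1
      _ = K * ‖y - x‖ := by ring
      _ = K * ‖x - y‖ := by rw [norm_sub_rev]
  · have hav : ∀ t ∈ Set.Ioo (0:ℝ) 1, t ∉ S := fun t _ ht => hSne ⟨t, ht⟩
    have := piece 0 1 zero_le_one le_rfl le_rfl hav
    rw [Function.comp_apply, Function.comp_apply, hφ0, hφ1] at this
    calc ‖f x - f y‖ = ‖f y - f x‖ := (norm_sub_rev _ _)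
      _ ≤ K * ‖y - x‖ * (1 - 0) := this
      _ = K * ‖x - y‖ := by rw [norm_sub_rev x y]; ring

theorem regularized_force_local_lipschitz (d : ℕ) (hd : 2 ≤ d) (ε Cd Cd' : ℝ)
    (hε : 0 < ε) (hCd : 0 < Cd) (hCd' : 0 < Cd')
    (W : EuclideanSpace ℝ (Fin d) → EuclideanSpace ℝ (Fin d))
    (hW : ∀ x, W x = if ε ≤ ‖x‖ then (Cd / ‖x‖ ^ d) • x else (Cd * ε ^ (-(d : ℝ))) • x)
    (W' : EuclideanSpace ℝ (Fin d) → EuclideanSpace ℝ (Fin d) →L[ℝ] EuclideanSpace ℝ (Fin d))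
    (hdiff : ∀ z, ‖z‖ ≠ ε → HasFDerivAt W (W' z) z)
    (hbound1 : ∀ z, ε ≤ ‖z‖ → ‖W' z‖ ≤ Cd' / ‖z‖ ^ d)
    (hbound2 : ∀ z, ‖z‖ < ε → ‖W' z‖ ≤ Cd' * ε ^ (-(d : ℝ))) :
    ∃ C : ℝ, 0 < C ∧ ∀ x y : EuclideanSpace ℝ (Fin d), ‖y - x‖ < 2 * ε →
      ‖W x - W y‖ ≤ (if 3 * ε ≤ ‖x‖ then C / ‖x‖ ^ d else C * ε ^ (-(d : ℝ))) * ‖x - y‖ := by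
  have hrp : ε ^ (-(d : ℝ)) = (ε ^ d)⁻¹ := by
    rw [← Real.rpow_natCast ε d, ← Real.rpow_neg hε.le]
  -- continuity of W
  have hWeq : W = fun z : EuclideanSpace ℝ (Fin d) => (Cd / (max ‖z‖ ε) ^ d) • z := by
    funext z
    rw [hW]
    split_ifs with h
    · rw [max_eq_left h]
    · rw [max_eq_right (le_of_lt (lt_of_not_ge h)), hrp, div_eq_mul_inv]
  have hWcont : Continuous W := by
    rw [hWeq]
    have h1 : Continuous fun z : EuclideanSpace ℝ (Fin d) => Cd / (max ‖z‖ ε) ^ d :=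
      continuous_const.div ((continuous_norm.max continuous_const).pow d)
        (fun z => (pow_pos (lt_of_lt_of_le hε (le_max_right _ _)) d).ne')
    exact h1.smul continuous_id
  refine ⟨3 ^ d * Cd', by positivity, ?_⟩
  intro x y hxy
  by_cases hx : 3 * ε ≤ ‖x‖
  · rw [if_pos hx]
    have hx0 : 0 < ‖x‖ := lt_of_lt_of_le (by linarith) hx
    -- points on segment have norm > ε and ≥ ‖x‖/3
    set φ : ℝ → EuclideanSpace ℝ (Fin d) := fun t => x + t • (y - x) with hφ
    have hφd : ∀ t : ℝ, HasDerivAt φ (y - x) t := by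
      intro t
      have := ((hasDerivAt_id t).smul_const (y - x)).const_add x
      simpa only [id_eq, one_smul] using this
    have hnφ : ∀ t ∈ Set.Icc (0:ℝ) 1, ‖x‖ / 3 ≤ ‖φ t‖ ∧ ε < ‖φ t‖ := by
      intro t ht
      have h1 : ‖φ t - x‖ ≤ ‖y - x‖ := by
        have : φ t - x = t • (y - x) := by
          simp only [hφ]; abel
        rw [this, norm_smul, Real.norm_eq_abs, abs_of_nonneg ht.1]
        calc t * ‖y - x‖ ≤ 1 * ‖y - x‖ :=
          mul_le_mul_of_nonneg_right ht.2 (norm_nonneg _)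
          _ = ‖y - x‖ := one_mul _
      have h2 : ‖x‖ - ‖y - x‖ ≤ ‖φ t‖ := by
        have := norm_sub_norm_le x (φ t)
        have h3 : ‖x - φ t‖ = ‖φ t - x‖ := norm_sub_rev _ _
        linarith [this, h1, h3 ▸ this]
      constructor
      · linarith
      · linarith
    have hbd : ∀ t ∈ Set.Ioo (0:ℝ) 1,
        ‖W' (φ t) (y - x)‖ ≤ (3:ℝ) ^ d * Cd' / ‖x‖ ^ d * ‖y - x‖ := by
      intro t ht
      obtain ⟨h1, h2⟩ := hnφ t ⟨ht.1.le, ht.2.le⟩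
      have hφpos : 0 < ‖φ t‖ := lt_trans hε h2
      have hx3 : (0:ℝ) < ‖x‖ / 3 := by linarith
      have hop : ‖W' (φ t)‖ ≤ (3:ℝ) ^ d * Cd' / ‖x‖ ^ d := by
        calc ‖W' (φ t)‖ ≤ Cd' / ‖φ t‖ ^ d := hbound1 _ h2.le
          _ ≤ Cd' / (‖x‖ / 3) ^ d := by
              apply div_le_div_of_nonneg_left hCd'.le (pow_pos hx3 d)
              exact pow_le_pow_left₀ hx3.le h1 d
          _ = (3:ℝ) ^ d * Cd' / ‖x‖ ^ d := by
              rw [div_pow]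
              field_simp
      calc ‖W' (φ t) (y - x)‖ ≤ ‖W' (φ t)‖ * ‖y - x‖ := (W' (φ t)).le_opNorm _
        _ ≤ (3:ℝ) ^ d * Cd' / ‖x‖ ^ d * ‖y - x‖ :=
            mul_le_mul_of_nonneg_right hop (norm_nonneg _)
    have hder : ∀ t ∈ Set.Ioo (0:ℝ) 1, HasDerivAt (W ∘ φ) (W' (φ t) (y - x)) t := by
      intro t ht
      exact (hdiff _ (ne_of_gt (hnφ t ⟨ht.1.le, ht.2.le⟩).2)).comp_hasDerivAt t (hφd t)
    have hKn : 0 ≤ (3:ℝ) ^ d * Cd' / ‖x‖ ^ d * ‖y - x‖ := by positivity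
    have := mvt_Ioo zero_le_one hKn
      (hWcont.comp (continuous_const.add (continuous_id.smul continuous_const))).continuousOn hder hbd
    have h2 : ‖W y - W x‖ ≤ (3:ℝ) ^ d * Cd' / ‖x‖ ^ d * ‖y - x‖ := by
      simpa [hφ, add_sub_cancel] using this
    calc ‖W x - W y‖ = ‖W y - W x‖ := norm_sub_rev _ _
      _ ≤ (3:ℝ) ^ d * Cd' / ‖x‖ ^ d * ‖y - x‖ := h2
      _ = (3:ℝ) ^ d * Cd' / ‖x‖ ^ d * ‖x - y‖ := by rw [norm_sub_rev y x]
  · rw [if_neg hx]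
    have hKbd : ∀ z : EuclideanSpace ℝ (Fin d), ‖z‖ ≠ ε →
        ‖W' z‖ ≤ Cd' * ε ^ (-(d : ℝ)) := by
      intro z hz
      rcases lt_or_ge ‖z‖ ε with h | h
      · exact hbound2 z h
      · calc ‖W' z‖ ≤ Cd' / ‖z‖ ^ d := hbound1 z h
          _ ≤ Cd' / ε ^ d := by
              apply div_le_div_of_nonneg_left hCd'.le (pow_pos hε d)
              exact pow_le_pow_left₀ hε.le h d
          _ = Cd' * ε ^ (-(d : ℝ)) := by rw [hrp, div_eq_mul_inv]
    have hK : 0 ≤ Cd' * ε ^ (-(d : ℝ)) := by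
      rw [hrp]; positivity
    have := lip_global hε hK hWcont hdiff hKbd x y
    calc ‖W x - W y‖ ≤ Cd' * ε ^ (-(d : ℝ)) * ‖x - y‖ := this
      _ ≤ (3:ℝ) ^ d * Cd' * ε ^ (-(d : ℝ)) * ‖x - y‖ := by
          rw [hrp]
          have h31 : (1:ℝ) ≤ 3 ^ d := one_le_pow₀ (by norm_num)
          have hpos : 0 ≤ Cd' * (ε ^ d)⁻¹ * ‖x - y‖ := by positivity
          calc Cd' * (ε ^ d)⁻¹ * ‖x - y‖
              ≤ 3 ^ d * (Cd' * (ε ^ d)⁻¹ * ‖x - y‖) := le_mul_of_one_le_left hpos h31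
            _ = 3 ^ d * Cd' * (ε ^ d)⁻¹ * ‖x - y‖ := by ring
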